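/- For the quadratic autonomous system Ẋ = X((m−q)Y/2 − (σ+2)X/2), Ẏ = −((m+q)/2)Y² − (N−1+σ/2)XY − XZ + (β/α)YZ + 1, Ż = Z((2−m−q)Y/2 + (2−σ)X/2): if (X,Y,Z)(η) is a solution on (0,∞) with X>0, Z>0, Y<0, X(η)→0 and Z(η)→Z⋆ as η→∞, and (η_j) is a nondecreasing sequence tending to ∞ with Ẏ(η_j)=0 for all j, then Y(η_j) → Y⋆ := (1/(m+q))·((β/α)Z⋆ − sqrt((β/α)²Z⋆² + 2(m+q))) as j→∞. -/

import Mathlib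

lemma neg_root_eq (a c d y : ℝ) (ha : 0 < a) (hd : d < 0) (hy : y < 0)
    (heq : a / 2 * y ^ 2 + c * y + d = 0) :
    y = (-c - Real.sqrt (c ^ 2 - 2 * a * d)) / a := by
  have h1 : (a * y + c) ^ 2 = c ^ 2 - 2 * a * d := by nlinarith
  have hlt : |c| < |a * y + c| := by
    rw [← Real.sqrt_sq_eq_abs, ← Real.sqrt_sq_eq_abs (a * y + c), h1]
    apply Real.sqrt_lt_sqrt (sq_nonneg c)
    nlinarith
  have hneg : a * y + c < 0 := by
    by_contra h
    push_neg at h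
    rw [abs_of_nonneg h] at hlt
    have : c ≤ |c| := le_abs_self c
    nlinarith
  have h2 : Real.sqrt (c ^ 2 - 2 * a * d) = -(a * y + c) := by
    rw [← h1, Real.sqrt_sq_eq_abs, abs_of_neg hneg]
  field_simp [h2]
  linarith [h2]

theorem critical_points_limit (m q σ α β Zstar : ℝ) (N : ℕ)
    (hm : 1 < m) (hq0 : 0 < q) (hq1 : q < 1) (hσ : 0 < σ) (hα : 0 < α) (hβ : 0 < β)
    (hN : 1 ≤ N)
    (X Y Z : ℝ → ℝ)
    (hXdiff : ∀ η > (0:ℝ), DifferentiableAt ℝ X η)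
    (hYdiff : ∀ η > (0:ℝ), DifferentiableAt ℝ Y η)
    (hZdiff : ∀ η > (0:ℝ), DifferentiableAt ℝ Z η)
    (hXeq : ∀ η > (0:ℝ), deriv X η = X η * ((m - q) / 2 * Y η - (σ + 2) / 2 * X η))
    (hYeq : ∀ η > (0:ℝ), deriv Y η = -((m + q) / 2) * Y η ^ 2
      - ((N : ℝ) - 1 + σ / 2) * X η * Y η - X η * Z η + β / α * Y η * Z η + 1)
    (hZeq : ∀ η > (0:ℝ), deriv Z η = Z η * ((2 - m - q) / 2 * Y η + (2 - σ) / 2 * X η))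
    (hXpos : ∀ η > (0:ℝ), 0 < X η)
    (hZpos : ∀ η > (0:ℝ), 0 < Z η)
    (hYneg : ∀ η > (0:ℝ), Y η < 0)
    (hXlim : Filter.Tendsto X Filter.atTop (nhds 0))
    (hZlim : Filter.Tendsto Z Filter.atTop (nhds Zstar))
    (ηs : ℕ → ℝ)
    (hmono : Monotone ηs)
    (hηpos : ∀ j, 0 < ηs j)
    (hηlim : Filter.Tendsto ηs Filter.atTop Filter.atTop)
    (hcrit : ∀ j, deriv Y (ηs j) = 0) :
    Filter.Tendsto (fun j => Y (ηs j)) Filter.atTop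
      (nhds (1 / (m + q) * (β / α * Zstar
        - Real.sqrt ((β / α) ^ 2 * Zstar ^ 2 + 2 * (m + q))))) := by
  have ha : (0:ℝ) < m + q := by linarith
  have hXj : Filter.Tendsto (fun j => X (ηs j)) Filter.atTop (nhds 0) := hXlim.comp hηlim
  have hZj : Filter.Tendsto (fun j => Z (ηs j)) Filter.atTop (nhds Zstar) := hZlim.comp hηlim
  set c : ℕ → ℝ := fun j => ((N : ℝ) - 1 + σ / 2) * X (ηs j) - β / α * Z (ηs j) with hc_def
  set d : ℕ → ℝ := fun j => X (ηs j) * Z (ηs j) - 1 with hd_def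
  have hc : Filter.Tendsto c Filter.atTop (nhds (-(β / α * Zstar))) := by
    have := ((hXj.const_mul ((N : ℝ) - 1 + σ / 2)).sub (hZj.const_mul (β / α)))
    simpa using this
  have hd : Filter.Tendsto d Filter.atTop (nhds (-1)) := by
    have := (hXj.mul hZj).sub_const 1
    simpa using this
  have hdneg : ∀ᶠ j in Filter.atTop, d j < 0 :=
    hd.eventually (Filter.Tendsto.eventually_lt_const (by norm_num) Filter.tendsto_id) |>.mono
      (fun j hj => hj)
  -- the limit of the explicit root formula
  have hg : Filter.Tendsto (fun j => (-(c j) - Real.sqrt ((c j) ^ 2 - 2 * (m + q) * d j)) / (m + q))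
      Filter.atTop
      (nhds (1 / (m + q) * (β / α * Zstar
        - Real.sqrt ((β / α) ^ 2 * Zstar ^ 2 + 2 * (m + q))))) := by
    have harg : Filter.Tendsto (fun j => (c j) ^ 2 - 2 * (m + q) * d j) Filter.atTop
        (nhds ((β / α) ^ 2 * Zstar ^ 2 + 2 * (m + q))) := by
      have := (hc.pow 2).sub (hd.const_mul (2 * (m + q)))
      convert this using 2
      ring
    have hsqrt : Filter.Tendsto (fun j => Real.sqrt ((c j) ^ 2 - 2 * (m + q) * d j))
        Filter.atTop (nhds (Real.sqrt ((β / α) ^ 2 * Zstar ^ 2 + 2 * (m + q)))) :=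
      (Real.continuous_sqrt.continuousAt).tendsto.comp harg
    have := (hc.neg.sub hsqrt).div_const (m + q)
    convert this using 2
    ring
  refine hg.congr' ?_
  filter_upwards [hdneg] with j hj
  have hηj := hηpos j
  have hquad : (m + q) / 2 * Y (ηs j) ^ 2 + c j * Y (ηs j) + d j = 0 := by
    have h0 := hcrit j
    rw [hYeq (ηs j) hηj] at h0
    simp only [hc_def, hd_def]
    linarith [h0]
  have := neg_root_eq (m + q) (c j) (d j) (Y (ηs j)) ha hj (hYneg (ηs j) hηj) hquad
  exact this.symm
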